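/- arXiv:1011.6057 — 6 statements merged into one kernel-verified Lean document; each statement's English description precedes it below -/
import Mathlib

section
/- Two real quadratic forms A and B on ℂ^d (equivalently complex symmetric d×d matrices), where A is invertible and the matrix A⁻¹B has d distinct eigenvalues, can be simultaneously diagonalized: there exists an invertible complex matrix U such that U A Uᵀ and U B Uᵀ are both diagonal. -/
open Matrix in
theorem stmt_2 (d : ℕ) (A B : Matrix (Fin d) (Fin d) ℂ)
    (hA : Aᵀ = A) (hB : Bᵀ = B) (hAinv : IsUnit A.det)
    (μ : Fin d → ℂ) (hμ : Function.Injective μ)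
    (hchar : (A⁻¹ * B).charpoly = ∏ i : Fin d, (Polynomial.X - Polynomial.C (μ i))) :
    ∃ U : Matrix (Fin d) (Fin d) ℂ, IsUnit U.det ∧
      (U * A * Uᵀ).IsDiag ∧ (U * B * Uᵀ).IsDiag := by
  set M : Matrix (Fin d) (Fin d) ℂ := A⁻¹ * B with hM
  -- B = A * M
  have hAM : A * M = B := by
    rw [hM, ← Matrix.mul_assoc, Matrix.mul_nonsing_inv _ hAinv, Matrix.one_mul]
  -- each μ i is a root of charpoly
  have hroot : ∀ i, ((μ i) • (1 : Matrix (Fin d) (Fin d) ℂ) - M).det = 0 := by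
    intro i
    have h1 : M.charpoly.eval (μ i) = 0 := by
      rw [hchar, Polynomial.eval_prod]
      apply Finset.prod_eq_zero (Finset.mem_univ i)
      simp
    have h2 : M.charpoly.eval (μ i) = ((μ i) • (1 : Matrix (Fin d) (Fin d) ℂ) - M).det := by
      rw [Matrix.charpoly, ← Polynomial.coe_evalRingHom, RingHom.map_det]
      congr 1
      ext k l
      by_cases h : k = l
      · subst h; simp [Matrix.charmatrix_apply_eq, Matrix.smul_apply]
      · simp [Matrix.charmatrix_apply_ne _ _ _ h, Matrix.one_apply_ne h,
          Matrix.smul_apply]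
    rw [← h2, h1]
  -- eigenvectors
  have hev : ∀ i : Fin d, ∃ v : Fin d → ℂ, v ≠ 0 ∧ M.mulVec v = μ i • v := by
    intro i
    obtain ⟨v, hv0, hv⟩ := (Matrix.exists_mulVec_eq_zero_iff).2 (hroot i)
    refine ⟨v, hv0, ?_⟩
    have := hv
    rw [Matrix.sub_mulVec, sub_eq_zero] at this
    rw [← this, Matrix.smul_mulVec, Matrix.one_mulVec]
  choose v hv0 hvM using hev
  -- the matrix whose rows are eigenvectors
  refine ⟨Matrix.of v, ?_, ?_, ?_⟩
  · -- invertibility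
    rw [← Matrix.isUnit_iff_isUnit_det, ← Matrix.linearIndependent_rows_iff_isUnit]
    exact Module.End.eigenvectors_linearIndependent' (Matrix.mulVecLin M) μ hμ v
      (fun i => ⟨Module.End.mem_eigenspace_iff.2 (by simpa using hvM i), hv0 i⟩)
  all_goals {
    intro i j hij
    have key : (μ j - μ i) * (v i ⬝ᵥ A.mulVec (v j)) = 0 := by
      have symmA : ∀ x y : Fin d → ℂ, x ⬝ᵥ A.mulVec y = y ⬝ᵥ A.mulVec x := by
        intro x y
        rw [Matrix.dotProduct_mulVec, ← Matrix.mulVec_transpose, hA, dotProduct_comm]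
      have symmB : ∀ x y : Fin d → ℂ, x ⬝ᵥ B.mulVec x = x ⬝ᵥ B.mulVec x := fun _ _ => rfl
      have hb : ∀ x y, x ⬝ᵥ B.mulVec y = y ⬝ᵥ B.mulVec x := by
        intro x y
        rw [Matrix.dotProduct_mulVec, ← Matrix.mulVec_transpose, hB, dotProduct_comm]
      have h1 : v i ⬝ᵥ B.mulVec (v j) = μ j * (v i ⬝ᵥ A.mulVec (v j)) := by
        rw [← hAM, ← Matrix.mulVec_mulVec, hvM j, Matrix.mulVec_smul,
          dotProduct_smul, smul_eq_mul]
      have h2 : v i ⬝ᵥ B.mulVec (v j) = μ i * (v i ⬝ᵥ A.mulVec (v j)) := by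
        rw [hb, ← hAM, ← Matrix.mulVec_mulVec, hvM i, Matrix.mulVec_smul,
          dotProduct_smul, smul_eq_mul, symmA]
      rw [sub_mul, ← h1, ← h2, sub_self]
    have ha : v i ⬝ᵥ A.mulVec (v j) = 0 := by
      rcases mul_eq_zero.1 key with h | h
      · exact absurd (hμ (by linear_combination -h : μ i = μ j)) hij
      · exact h
    have entry : ∀ C : Matrix (Fin d) (Fin d) ℂ,
        (Matrix.of v * C * (Matrix.of v)ᵀ) i j = v i ⬝ᵥ C.mulVec (v j) := by
      intro C
      simp only [Matrix.mul_apply, Matrix.transpose_apply, Matrix.of_apply,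
        Matrix.mulVec, dotProduct, Finset.sum_mul, Finset.mul_sum]
      rw [Finset.sum_comm]
      congr 1; ext k; congr 1; ext l; ring
    first
    | (rw [entry A]; exact ha)
    | (rw [entry B]
       rw [← hAM, ← Matrix.mulVec_mulVec, hvM j, Matrix.mulVec_smul,
         dotProduct_smul, smul_eq_mul, ha, mul_zero])
  }
end

section
/- Let f(x,y,z) = det(Ax + By + Cz) where A = Id_d, B = diag(β₁,…,β_d) with distinct β_i, and C = (c_{ij}) is a complex symmetric d×d matrix. Then for each i, the diagonal entry satisfies c_{ii} = β_i · (∂f/∂z)(−β_i, 1, 0) / (∂f/∂y)(−β_i, 1, 0), provided (∂f/∂y)(−β_i,1,0) ≠ 0. -/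
open Matrix MvPolynomial Finset

theorem pderiv_finset_prod {R : Type*} [CommSemiring R] {σT ι : Type*} [DecidableEq ι]
    (k : σT) (s : Finset ι) (g : ι → MvPolynomial σT R) :
    pderiv k (∏ j ∈ s, g j) = ∑ j ∈ s, pderiv k (g j) * ∏ l ∈ s.erase j, g l := by
  induction s using Finset.induction_on with
  | empty => simp
  | insert a s ha ih =>
    rw [Finset.prod_insert ha, pderiv_mul, ih, Finset.sum_insert ha, Finset.erase_insert ha,
      Finset.mul_sum]
    congr 1
    refine Finset.sum_congr rfl fun j hj => ?_
    rw [Finset.erase_insert_of_ne (ne_of_mem_of_not_mem hj ha).symm, Finset.prod_insert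
      (fun h => ha (Finset.mem_of_mem_erase h))]
    ring

theorem perm_sum_key {d : ℕ} (mv dv : Fin d → Fin d → ℂ) (i : Fin d)
    (h0 : ∀ a b, a ≠ b → mv a b = 0) (hii : mv i i = 0) :
    ∑ σ : Equiv.Perm (Fin d), ((Equiv.Perm.sign σ : ℤ) : ℂ) *
      ∑ j, dv (σ j) j * ∏ l ∈ Finset.univ.erase j, mv (σ l) l
    = dv i i * ∏ l ∈ Finset.univ.erase i, mv l l := by
  rw [Finset.sum_eq_single (1 : Equiv.Perm (Fin d))]
  · simp only [Equiv.Perm.sign_one, Units.val_one, Int.cast_one, one_mul, Equiv.Perm.one_apply]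
    rw [Finset.sum_eq_single i]
    · intro j _ hj
      have hmem : i ∈ Finset.univ.erase j := Finset.mem_erase.2 ⟨Ne.symm hj, Finset.mem_univ i⟩
      exact mul_eq_zero_of_right _ (Finset.prod_eq_zero hmem hii)
    · simp
  · intro σ _ hσ
    obtain ⟨a, ha⟩ : ∃ a, σ a ≠ a := by
      by_contra h
      push_neg at h
      exact hσ (Equiv.ext h)
    have hb : σ (σ a) ≠ σ a := fun h => ha (σ.injective h)
    rw [Finset.sum_eq_zero, mul_zero]
    intro j _
    rcases eq_or_ne j a with rfl | hja
    · have hmem : σ j ∈ Finset.univ.erase j := Finset.mem_erase.2 ⟨ha, Finset.mem_univ _⟩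
      exact mul_eq_zero_of_right _ (Finset.prod_eq_zero hmem (h0 _ _ hb))
    · have hmem : a ∈ Finset.univ.erase j := Finset.mem_erase.2 ⟨Ne.symm hja, Finset.mem_univ a⟩
      exact mul_eq_zero_of_right _ (Finset.prod_eq_zero hmem (h0 _ _ ha))
  · simp

open Matrix MvPolynomial in
theorem stmt_3 (d : ℕ) (β : Fin d → ℂ) (hβ : Function.Injective β)
    (Cm : Matrix (Fin d) (Fin d) ℂ) (hCm : Cmᵀ = Cm)
    (f : MvPolynomial (Fin 3) ℂ)
    (hf : f = Matrix.det (Matrix.of fun i j : Fin d =>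
      (if i = j then X 0 + MvPolynomial.C (β i) * X 1 else 0) + MvPolynomial.C (Cm i j) * X 2))
    (i : Fin d)
    (hden : eval ![-β i, 1, 0] (pderiv (1 : Fin 3) f) ≠ 0) :
    Cm i i = β i * eval ![-β i, 1, 0] (pderiv (2 : Fin 3) f)
      / eval ![-β i, 1, 0] (pderiv (1 : Fin 3) f) := by
  set pt : Fin 3 → ℂ := ![-β i, 1, 0] with hpt
  set N : Fin d → Fin d → MvPolynomial (Fin 3) ℂ := fun a b =>
    (if a = b then X 0 + MvPolynomial.C (β a) * X 1 else 0) + MvPolynomial.C (Cm a b) * X 2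
    with hN
  have hfN : f = ∑ σ : Equiv.Perm (Fin d),
      ((Equiv.Perm.sign σ : ℤ) : MvPolynomial (Fin 3) ℂ) * ∏ j, N (σ j) j := by
    rw [hf, Matrix.det_apply']
    rfl
  have hev : ∀ a b, eval pt (N a b) = if a = b then β a - β i else 0 := by
    intro a b
    simp only [hN, hpt]
    split <;> simp <;> ring
  have hd1 : ∀ a b, eval pt (pderiv (1 : Fin 3) (N a b)) = if a = b then β a else 0 := by
    intro a b
    simp only [hN, hpt]
    split <;> simp [pderiv_X]
  have hd2 : ∀ a b, eval pt (pderiv (2 : Fin 3) (N a b)) = Cm a b := by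
    intro a b
    simp only [hN, hpt]
    split <;> simp [pderiv_X]
  have main : ∀ k : Fin 3, eval pt (pderiv k f) =
      ∑ σ : Equiv.Perm (Fin d), ((Equiv.Perm.sign σ : ℤ) : ℂ) *
        ∑ j, eval pt (pderiv k (N (σ j) j)) * ∏ l ∈ Finset.univ.erase j, eval pt (N (σ l) l) := by
    intro k
    rw [hfN, map_sum, map_sum]
    refine Finset.sum_congr rfl fun σ _ => ?_
    rw [show ((Equiv.Perm.sign σ : ℤ) : MvPolynomial (Fin 3) ℂ)
        = MvPolynomial.C ((Equiv.Perm.sign σ : ℤ) : ℂ) from (map_intCast _ _).symm,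
      pderiv_C_mul, eval_mul, eval_C, pderiv_finset_prod, map_sum]
    congr 1
    refine Finset.sum_congr rfl fun j _ => ?_
    rw [eval_mul, map_prod]
  have h0 : ∀ a b : Fin d, a ≠ b → (if a = b then β a - β i else 0) = 0 := by
    intro a b hab; rw [if_neg hab]
  have hii : (if i = i then β i - β i else 0) = 0 := by simp
  have h1 : eval pt (pderiv (1 : Fin 3) f)
      = β i * ∏ l ∈ Finset.univ.erase i, (β l - β i) := by
    rw [main 1]
    simp only [hd1, hev]
    rw [perm_sum_key (fun a b => if a = b then β a - β i else 0)
      (fun a b => if a = b then β a else 0) i h0 hii]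
    simp
  have h2 : eval pt (pderiv (2 : Fin 3) f)
      = Cm i i * ∏ l ∈ Finset.univ.erase i, (β l - β i) := by
    rw [main 2]
    simp only [hd2, hev]
    rw [perm_sum_key (fun a b => if a = b then β a - β i else 0) (fun a b => Cm a b) i h0 hii]
    simp
  rw [h1, h2]
  rw [h1] at hden
  have hβi : β i ≠ 0 := fun h => hden (by rw [h, zero_mul])
  have hP : (∏ l ∈ Finset.univ.erase i, (β l - β i)) ≠ 0 := fun h => hden (by rw [h, mul_zero])
  field_simp
end

section
/- Let f(x,y,z) = 93081x⁴ + 53516x³y − 73684x²y² − 31504xy³ + 9216y⁴ − 369150x²z² − 159700xyz² + 57600y²z² + 90000z⁴, and let M be the symmetric matrix [[50x, −25x, −26x−34y−25z, 9x+6y+15z],[−25x, 25x, 27x+18y−20z, −9x−6y],[−26x−34y−25z, 27x+18y−20z, 108x+72y, −18x−12y],[9x+6y+15z, −9x−6y, −18x−12y, 6x+4y]]. Then det M = f(x,y,z), and M evaluated at (x,y,z) = (1,0,0) is positive definite. -/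
theorem stmt_15 :
    (∀ x y z : ℝ,
      (!![50*x, -25*x, -26*x - 34*y - 25*z, 9*x + 6*y + 15*z;
          -25*x, 25*x, 27*x + 18*y - 20*z, -9*x - 6*y;
          -26*x - 34*y - 25*z, 27*x + 18*y - 20*z, 108*x + 72*y, -18*x - 12*y;
          9*x + 6*y + 15*z, -9*x - 6*y, -18*x - 12*y, 6*x + 4*y]).det
        = 93081*x^4 + 53516*x^3*y - 73684*x^2*y^2 - 31504*x*y^3 + 9216*y^4
          - 369150*x^2*z^2 - 159700*x*y*z^2 + 57600*y^2*z^2 + 90000*z^4) ∧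
    Matrix.PosDef (!![(50:ℝ), -25, -26, 9;
                      -25, 25, 27, -9;
                      -26, 27, 108, -18;
                      9, -9, -18, 6]) := by
  constructor
  · intro x y z
    simp [Matrix.det_succ_row_zero, Fin.sum_univ_succ, Matrix.det_fin_three, Matrix.submatrix,
      show Fin.succAbove (1 : Fin 4) 2 = 3 from rfl, show Fin.succAbove (2 : Fin 4) 2 = 3 from rfl,
      show Fin.succAbove (3 : Fin 4) 2 = 2 from rfl]
    ring
  · rw [Matrix.posDef_iff_dotProduct_mulVec]
    constructor
    · ext i j
      fin_cases i <;> fin_cases j <;>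
        simp [Matrix.conjTranspose, Matrix.transpose, Matrix.vecHead, Matrix.vecTail]
    · intro v hv
      have h : v ≠ 0 := hv
      have h0 : v 0 ≠ 0 ∨ v 1 ≠ 0 ∨ v 2 ≠ 0 ∨ v 3 ≠ 0 := by
        by_contra hc
        push_neg at hc
        apply h
        ext i
        fin_cases i <;> simp [hc.1, hc.2.1, hc.2.2.1, hc.2.2.2]
      simp only [dotProduct, Matrix.mulVec, Fin.sum_univ_four, RCLike.star_def]
      simp [dotProduct, Matrix.mulVec, Fin.sum_univ_four]
      set a := v 0; set b := v 1; set c := v 2; set d := v 3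
      by_contra hQ
      push_neg at hQ
      have hs1 : (50*a-25*b-26*c+9*d)^2 = 0 := by
        nlinarith [sq_nonneg (50*a-25*b-26*c+9*d), sq_nonneg (25*b+28*c-9*d),
          sq_nonneg (1970*c-207*d), sq_nonneg d]
      have hs2 : (25*b+28*c-9*d)^2 = 0 := by
        nlinarith [sq_nonneg (50*a-25*b-26*c+9*d), sq_nonneg (25*b+28*c-9*d),
          sq_nonneg (1970*c-207*d), sq_nonneg d]
      have hs3 : (1970*c-207*d)^2 = 0 := by
        nlinarith [sq_nonneg (50*a-25*b-26*c+9*d), sq_nonneg (25*b+28*c-9*d),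
          sq_nonneg (1970*c-207*d), sq_nonneg d]
      have hs4 : d^2 = 0 := by
        nlinarith [sq_nonneg (50*a-25*b-26*c+9*d), sq_nonneg (25*b+28*c-9*d),
          sq_nonneg (1970*c-207*d), sq_nonneg d]
      rw [sq_eq_zero_iff] at hs1 hs2 hs3 hs4
      have hd0 : d = 0 := hs4
      have hc0 : c = 0 := by linarith
      have hb0 : b = 0 := by linarith
      have ha0 : a = 0 := by linarith
      rcases h0 with ha | hb | hc | hd
      · exact ha ha0
      · exact hb hb0
      · exact hc hc0
      · exact hd hd0
end

section
/- Let M₁₄₆₈ = [[25x, 0, −32x+12y, −60z],[0, 25x, 10z, 24x+16y],[−32x+12y, 10z, 6x+4y, 0],[−60z, 24x+16y, 0, 6x+4y]]. Then det(M₁₄₆₈) = 4·(93081x⁴ + 53516x³y − 73684x²y² − 31504xy³ + 9216y⁴ − 369150x²z² − 159700xyz² + 57600y²z² + 90000z⁴), and for no real (x,y,z) is M₁₄₆₈(x,y,z) positive definite or negative definite. -/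
private lemma castSucc2 : (Fin.castSucc 2 : Fin 4) = 2 := rfl

private lemma quadform_pos {M : Matrix (Fin 4) (Fin 4) ℝ} (h : M.PosDef)
    (v : Fin 4 → ℝ) (hv : v ≠ 0) : 0 < dotProduct v (M.mulVec v) := by
  simpa using h.dotProduct_mulVec_pos hv

theorem stmt_16 :
    (∀ x y z : ℝ,
      (!![25*x, 0, -32*x + 12*y, -60*z;
          0, 25*x, 10*z, 24*x + 16*y;
          -32*x + 12*y, 10*z, 6*x + 4*y, 0;
          -60*z, 24*x + 16*y, 0, 6*x + 4*y]).det
        = 4 * (93081*x^4 + 53516*x^3*y - 73684*x^2*y^2 - 31504*x*y^3 + 9216*y^4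
            - 369150*x^2*z^2 - 159700*x*y*z^2 + 57600*y^2*z^2 + 90000*z^4)) ∧
    (∀ x y z : ℝ,
      ¬ Matrix.PosDef (!![25*x, 0, -32*x + 12*y, -60*z;
          0, 25*x, 10*z, 24*x + 16*y;
          -32*x + 12*y, 10*z, 6*x + 4*y, 0;
          -60*z, 24*x + 16*y, 0, 6*x + 4*y]) ∧
      ¬ Matrix.PosDef (-(!![25*x, 0, -32*x + 12*y, -60*z;
          0, 25*x, 10*z, 24*x + 16*y;
          -32*x + 12*y, 10*z, 6*x + 4*y, 0;
          -60*z, 24*x + 16*y, 0, 6*x + 4*y]))) := by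
  constructor
  · intro x y z
    simp [Matrix.det_succ_row_zero, Fin.sum_univ_succ, Fin.succAbove]
    ring
  · intro x y z
    constructor
    · intro h
      have h0 : (0:ℝ) < 25*x := by
        have := quadform_pos h ![1,0,0,0] (by
          intro hc; have := congrFun hc 0; simp at this)
        simpa [dotProduct, Matrix.mulVec, Fin.sum_univ_four] using this
      have hx : x > 0 := by linarith
      have h1 : (0:ℝ) < 25*x * (25*x*(6*x+4*y) - (-32*x+12*y)^2) := by
        have := quadform_pos h ![-(-32*x+12*y),0,25*x,0] (by
          intro hc; have := congrFun hc 2; simp at this; linarith)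
        have e : dotProduct ![-(-32*x+12*y),0,25*x,0]
            ((!![25*x, 0, -32*x + 12*y, -60*z;
          0, 25*x, 10*z, 24*x + 16*y;
          -32*x + 12*y, 10*z, 6*x + 4*y, 0;
          -60*z, 24*x + 16*y, 0, 6*x + 4*y]).mulVec ![-(-32*x+12*y),0,25*x,0])
            = 25*x * (25*x*(6*x+4*y) - (-32*x+12*y)^2) := by
          simp [dotProduct, Matrix.mulVec, Fin.sum_univ_four]; ring
        rw [e] at this; exact this
      have h2 : (0:ℝ) < 25*x * (25*x*(6*x+4*y) - (24*x+16*y)^2) := by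
        have := quadform_pos h ![0,-(24*x+16*y),0,25*x] (by
          intro hc; have := congrFun hc 3; simp at this; linarith)
        have e : dotProduct ![0,-(24*x+16*y),0,25*x]
            ((!![25*x, 0, -32*x + 12*y, -60*z;
          0, 25*x, 10*z, 24*x + 16*y;
          -32*x + 12*y, 10*z, 6*x + 4*y, 0;
          -60*z, 24*x + 16*y, 0, 6*x + 4*y]).mulVec ![0,-(24*x+16*y),0,25*x])
            = 25*x * (25*x*(6*x+4*y) - (24*x+16*y)^2) := by
          simp [dotProduct, Matrix.mulVec, Fin.sum_univ_four]; ring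
        rw [e] at this; exact this
      have h1' : 25*x*(6*x+4*y) - (-32*x+12*y)^2 > 0 := by
        rcases mul_pos_iff.mp h1 with ⟨_, h⟩ | ⟨h, _⟩
        · exact h
        · linarith
      have h2' : 25*x*(6*x+4*y) - (24*x+16*y)^2 > 0 := by
        rcases mul_pos_iff.mp h2 with ⟨_, h⟩ | ⟨h, _⟩
        · exact h
        · linarith
      nlinarith [sq_nonneg x, sq_nonneg y, sq_nonneg (x-y), sq_nonneg (x+y), sq_nonneg (5*x-2*y), sq_nonneg (5*x+2*y)]
    · intro h
      have h0 : (0:ℝ) < -(25*x) := by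
        have := quadform_pos h ![1,0,0,0] (by
          intro hc; have := congrFun hc 0; simp at this)
        simpa [dotProduct, Matrix.mulVec, Fin.sum_univ_four] using this
      have hx : x < 0 := by linarith
      have h1 : (0:ℝ) < -(25*x) * (25*x*(6*x+4*y) - (-32*x+12*y)^2) := by
        have := quadform_pos h ![-(-32*x+12*y),0,25*x,0] (by
          intro hc; have := congrFun hc 2; simp at this; linarith)
        have e : dotProduct ![-(-32*x+12*y),0,25*x,0]
            ((-(!![25*x, 0, -32*x + 12*y, -60*z;
          0, 25*x, 10*z, 24*x + 16*y;
          -32*x + 12*y, 10*z, 6*x + 4*y, 0;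
          -60*z, 24*x + 16*y, 0, 6*x + 4*y])).mulVec ![-(-32*x+12*y),0,25*x,0])
            = -(25*x) * (25*x*(6*x+4*y) - (-32*x+12*y)^2) := by
          simp [dotProduct, Matrix.mulVec, Fin.sum_univ_four]; ring
        rw [e] at this; exact this
      have h2 : (0:ℝ) < -(25*x) * (25*x*(6*x+4*y) - (24*x+16*y)^2) := by
        have := quadform_pos h ![0,-(24*x+16*y),0,25*x] (by
          intro hc; have := congrFun hc 3; simp at this; linarith)
        have e : dotProduct ![0,-(24*x+16*y),0,25*x]
            ((-(!![25*x, 0, -32*x + 12*y, -60*z;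
          0, 25*x, 10*z, 24*x + 16*y;
          -32*x + 12*y, 10*z, 6*x + 4*y, 0;
          -60*z, 24*x + 16*y, 0, 6*x + 4*y])).mulVec ![0,-(24*x+16*y),0,25*x])
            = -(25*x) * (25*x*(6*x+4*y) - (24*x+16*y)^2) := by
          simp [dotProduct, Matrix.mulVec, Fin.sum_univ_four]; ring
        rw [e] at this; exact this
      have h1' : 25*x*(6*x+4*y) - (-32*x+12*y)^2 > 0 := by
        rcases mul_pos_iff.mp h1 with ⟨_, h⟩ | ⟨h, _⟩
        · exact h
        · linarith
      have h2' : 25*x*(6*x+4*y) - (24*x+16*y)^2 > 0 := by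
        rcases mul_pos_iff.mp h2 with ⟨_, h⟩ | ⟨h, _⟩
        · exact h
        · linarith
      nlinarith [sq_nonneg x, sq_nonneg y, sq_nonneg (x-y), sq_nonneg (x+y), sq_nonneg (5*x-2*y), sq_nonneg (5*x+2*y)]
end

section
/- Every principal 4×4 minor of the 8×8 matrix B with B_{ij} given by: B = [[0, z, y, y+z, x, x+z, x+y, x+y+z],[z, 0, y+z, y, x+z, x, x+y+z, x+y],[y, y+z, 0, z, x+y, x+y+z, x, x+z],[y+z, y, z, 0, x+y+z, x+y, x+z, x],[x, x+z, x+y, x+y+z, 0, z, y, y+z],[x+z, x, x+y+z, x+y, z, 0, y+z, y],[x+y, x+y+z, x, x+z, y, y+z, 0, z],[x+y+z, x+y, x+z, x, y+z, y, z, 0]], i.e., the determinant of B restricted to rows and columns indexed by any 4-element subset S ⊆ {1,…,8}, is a scalar multiple of the polynomial f(x,y,z) = xyz(x+y+z). -/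
def bitangentMatrix (x y z : ℝ) : Matrix (Fin 8) (Fin 8) ℝ :=
  !![0, z, y, y+z, x, x+z, x+y, x+y+z;
     z, 0, y+z, y, x+z, x, x+y+z, x+y;
     y, y+z, 0, z, x+y, x+y+z, x, x+z;
     y+z, y, z, 0, x+y+z, x+y, x+z, x;
     x, x+z, x+y, x+y+z, 0, z, y, y+z;
     x+z, x, x+y+z, x+y, z, 0, y+z, y;
     x+y, x+y+z, x, x+z, y, y+z, 0, z;
     x+y+z, x+y, x+z, x, y+z, y, z, 0]

@[simp] lemma ent_0_0 (x y z : ℝ) : bitangentMatrix x y z 0 0 = 0 := rfl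
@[simp] lemma ent_0_1 (x y z : ℝ) : bitangentMatrix x y z 0 1 = z := rfl
@[simp] lemma ent_0_2 (x y z : ℝ) : bitangentMatrix x y z 0 2 = y := rfl
@[simp] lemma ent_0_3 (x y z : ℝ) : bitangentMatrix x y z 0 3 = y+z := rfl
@[simp] lemma ent_0_4 (x y z : ℝ) : bitangentMatrix x y z 0 4 = x := rfl
@[simp] lemma ent_0_5 (x y z : ℝ) : bitangentMatrix x y z 0 5 = x+z := rfl
@[simp] lemma ent_0_6 (x y z : ℝ) : bitangentMatrix x y z 0 6 = x+y := rfl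
@[simp] lemma ent_0_7 (x y z : ℝ) : bitangentMatrix x y z 0 7 = x+y+z := rfl
@[simp] lemma ent_1_0 (x y z : ℝ) : bitangentMatrix x y z 1 0 = z := rfl
@[simp] lemma ent_1_1 (x y z : ℝ) : bitangentMatrix x y z 1 1 = 0 := rfl
@[simp] lemma ent_1_2 (x y z : ℝ) : bitangentMatrix x y z 1 2 = y+z := rfl
@[simp] lemma ent_1_3 (x y z : ℝ) : bitangentMatrix x y z 1 3 = y := rfl
@[simp] lemma ent_1_4 (x y z : ℝ) : bitangentMatrix x y z 1 4 = x+z := rfl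
@[simp] lemma ent_1_5 (x y z : ℝ) : bitangentMatrix x y z 1 5 = x := rfl
@[simp] lemma ent_1_6 (x y z : ℝ) : bitangentMatrix x y z 1 6 = x+y+z := rfl
@[simp] lemma ent_1_7 (x y z : ℝ) : bitangentMatrix x y z 1 7 = x+y := rfl
@[simp] lemma ent_2_0 (x y z : ℝ) : bitangentMatrix x y z 2 0 = y := rfl
@[simp] lemma ent_2_1 (x y z : ℝ) : bitangentMatrix x y z 2 1 = y+z := rfl
@[simp] lemma ent_2_2 (x y z : ℝ) : bitangentMatrix x y z 2 2 = 0 := rfl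
@[simp] lemma ent_2_3 (x y z : ℝ) : bitangentMatrix x y z 2 3 = z := rfl
@[simp] lemma ent_2_4 (x y z : ℝ) : bitangentMatrix x y z 2 4 = x+y := rfl
@[simp] lemma ent_2_5 (x y z : ℝ) : bitangentMatrix x y z 2 5 = x+y+z := rfl
@[simp] lemma ent_2_6 (x y z : ℝ) : bitangentMatrix x y z 2 6 = x := rfl
@[simp] lemma ent_2_7 (x y z : ℝ) : bitangentMatrix x y z 2 7 = x+z := rfl
@[simp] lemma ent_3_0 (x y z : ℝ) : bitangentMatrix x y z 3 0 = y+z := rfl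
@[simp] lemma ent_3_1 (x y z : ℝ) : bitangentMatrix x y z 3 1 = y := rfl
@[simp] lemma ent_3_2 (x y z : ℝ) : bitangentMatrix x y z 3 2 = z := rfl
@[simp] lemma ent_3_3 (x y z : ℝ) : bitangentMatrix x y z 3 3 = 0 := rfl
@[simp] lemma ent_3_4 (x y z : ℝ) : bitangentMatrix x y z 3 4 = x+y+z := rfl
@[simp] lemma ent_3_5 (x y z : ℝ) : bitangentMatrix x y z 3 5 = x+y := rfl
@[simp] lemma ent_3_6 (x y z : ℝ) : bitangentMatrix x y z 3 6 = x+z := rfl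
@[simp] lemma ent_3_7 (x y z : ℝ) : bitangentMatrix x y z 3 7 = x := rfl
@[simp] lemma ent_4_0 (x y z : ℝ) : bitangentMatrix x y z 4 0 = x := rfl
@[simp] lemma ent_4_1 (x y z : ℝ) : bitangentMatrix x y z 4 1 = x+z := rfl
@[simp] lemma ent_4_2 (x y z : ℝ) : bitangentMatrix x y z 4 2 = x+y := rfl
@[simp] lemma ent_4_3 (x y z : ℝ) : bitangentMatrix x y z 4 3 = x+y+z := rfl
@[simp] lemma ent_4_4 (x y z : ℝ) : bitangentMatrix x y z 4 4 = 0 := rfl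
@[simp] lemma ent_4_5 (x y z : ℝ) : bitangentMatrix x y z 4 5 = z := rfl
@[simp] lemma ent_4_6 (x y z : ℝ) : bitangentMatrix x y z 4 6 = y := rfl
@[simp] lemma ent_4_7 (x y z : ℝ) : bitangentMatrix x y z 4 7 = y+z := rfl
@[simp] lemma ent_5_0 (x y z : ℝ) : bitangentMatrix x y z 5 0 = x+z := rfl
@[simp] lemma ent_5_1 (x y z : ℝ) : bitangentMatrix x y z 5 1 = x := rfl
@[simp] lemma ent_5_2 (x y z : ℝ) : bitangentMatrix x y z 5 2 = x+y+z := rfl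
@[simp] lemma ent_5_3 (x y z : ℝ) : bitangentMatrix x y z 5 3 = x+y := rfl
@[simp] lemma ent_5_4 (x y z : ℝ) : bitangentMatrix x y z 5 4 = z := rfl
@[simp] lemma ent_5_5 (x y z : ℝ) : bitangentMatrix x y z 5 5 = 0 := rfl
@[simp] lemma ent_5_6 (x y z : ℝ) : bitangentMatrix x y z 5 6 = y+z := rfl
@[simp] lemma ent_5_7 (x y z : ℝ) : bitangentMatrix x y z 5 7 = y := rfl
@[simp] lemma ent_6_0 (x y z : ℝ) : bitangentMatrix x y z 6 0 = x+y := rfl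
@[simp] lemma ent_6_1 (x y z : ℝ) : bitangentMatrix x y z 6 1 = x+y+z := rfl
@[simp] lemma ent_6_2 (x y z : ℝ) : bitangentMatrix x y z 6 2 = x := rfl
@[simp] lemma ent_6_3 (x y z : ℝ) : bitangentMatrix x y z 6 3 = x+z := rfl
@[simp] lemma ent_6_4 (x y z : ℝ) : bitangentMatrix x y z 6 4 = y := rfl
@[simp] lemma ent_6_5 (x y z : ℝ) : bitangentMatrix x y z 6 5 = y+z := rfl
@[simp] lemma ent_6_6 (x y z : ℝ) : bitangentMatrix x y z 6 6 = 0 := rfl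
@[simp] lemma ent_6_7 (x y z : ℝ) : bitangentMatrix x y z 6 7 = z := rfl
@[simp] lemma ent_7_0 (x y z : ℝ) : bitangentMatrix x y z 7 0 = x+y+z := rfl
@[simp] lemma ent_7_1 (x y z : ℝ) : bitangentMatrix x y z 7 1 = x+y := rfl
@[simp] lemma ent_7_2 (x y z : ℝ) : bitangentMatrix x y z 7 2 = x+z := rfl
@[simp] lemma ent_7_3 (x y z : ℝ) : bitangentMatrix x y z 7 3 = x := rfl
@[simp] lemma ent_7_4 (x y z : ℝ) : bitangentMatrix x y z 7 4 = y+z := rfl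
@[simp] lemma ent_7_5 (x y z : ℝ) : bitangentMatrix x y z 7 5 = y := rfl
@[simp] lemma ent_7_6 (x y z : ℝ) : bitangentMatrix x y z 7 6 = z := rfl
@[simp] lemma ent_7_7 (x y z : ℝ) : bitangentMatrix x y z 7 7 = 0 := rfl

@[simp] lemma finmk_0 (h : 0 < 8) : (⟨0, h⟩ : Fin 8) = (0 : Fin 8) := rfl
@[simp] lemma finmk_1 (h : 1 < 8) : (⟨1, h⟩ : Fin 8) = (1 : Fin 8) := rfl
@[simp] lemma finmk_2 (h : 2 < 8) : (⟨2, h⟩ : Fin 8) = (2 : Fin 8) := rfl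
@[simp] lemma finmk_3 (h : 3 < 8) : (⟨3, h⟩ : Fin 8) = (3 : Fin 8) := rfl
@[simp] lemma finmk_4 (h : 4 < 8) : (⟨4, h⟩ : Fin 8) = (4 : Fin 8) := rfl
@[simp] lemma finmk_5 (h : 5 < 8) : (⟨5, h⟩ : Fin 8) = (5 : Fin 8) := rfl
@[simp] lemma finmk_6 (h : 6 < 8) : (⟨6, h⟩ : Fin 8) = (6 : Fin 8) := rfl
@[simp] lemma finmk_7 (h : 7 < 8) : (⟨7, h⟩ : Fin 8) = (7 : Fin 8) := rfl


lemma det4 (M : Matrix (Fin 4) (Fin 4) ℝ) : M.det =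
    M 0 0 * (M 1 1 * (M 2 2 * M 3 3 - M 2 3 * M 3 2) - M 1 2 * (M 2 1 * M 3 3 - M 2 3 * M 3 1)
      + M 1 3 * (M 2 1 * M 3 2 - M 2 2 * M 3 1))
  - M 0 1 * (M 1 0 * (M 2 2 * M 3 3 - M 2 3 * M 3 2) - M 1 2 * (M 2 0 * M 3 3 - M 2 3 * M 3 0)
      + M 1 3 * (M 2 0 * M 3 2 - M 2 2 * M 3 0))
  + M 0 2 * (M 1 0 * (M 2 1 * M 3 3 - M 2 3 * M 3 1) - M 1 1 * (M 2 0 * M 3 3 - M 2 3 * M 3 0)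
      + M 1 3 * (M 2 0 * M 3 1 - M 2 1 * M 3 0))
  - M 0 3 * (M 1 0 * (M 2 1 * M 3 2 - M 2 2 * M 3 1) - M 1 1 * (M 2 0 * M 3 2 - M 2 2 * M 3 0)
      + M 1 2 * (M 2 0 * M 3 1 - M 2 1 * M 3 0)) := by
  simp [Matrix.det_succ_row_zero, Fin.sum_univ_succ, Fin.succAbove]
  ring

set_option maxHeartbeats 1600000 in
lemma key_minor (a b c d : Fin 8) (hab : a < b) (hbc : b < c) (hcd : c < d) :
    ∃ C : ℝ, ∀ x y z : ℝ,
      ((bitangentMatrix x y z).submatrix ![a,b,c,d] ![a,b,c,d]).det = C * (x*y*z*(x+y+z)) := by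
  refine ⟨((bitangentMatrix 1 1 1).submatrix ![a,b,c,d] ![a,b,c,d]).det / 3, fun x y z => ?_⟩
  fin_cases a <;> fin_cases b <;>
    first
    | exact absurd hab (by decide)
    | (fin_cases c <;>
        first
        | exact absurd hbc (by decide)
        | (fin_cases d <;>
            first
            | exact absurd hcd (by decide)
            | (rw [det4, det4]
               simp only [Matrix.submatrix_apply, Matrix.cons_val_zero, Matrix.cons_val_one,
                 Matrix.cons_val_two, Matrix.cons_val_three, Matrix.head_cons, Matrix.vecHead,
                 Matrix.vecTail, Function.comp_apply, finmk_0, finmk_1, finmk_2, finmk_3,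
                 finmk_4, finmk_5, finmk_6, finmk_7, Matrix.cons_val_succ]
               norm_num
               ring)))

theorem stmt_17 (e : Fin 4 → Fin 8) (he : Function.Injective e) :
    ∃ c : ℝ, ∀ x y z : ℝ,
      ((bitangentMatrix x y z).submatrix e e).det = c * (x * y * z * (x + y + z)) := by
  classical
  set S : Finset (Fin 8) := Finset.univ.image e with hS
  have hcard : S.card = 4 := by
    rw [hS, Finset.card_image_of_injective _ he, Finset.card_univ]
    simp
  set m := S.orderEmbOfFin hcard with hm
  have hmono : StrictMono m := (S.orderEmbOfFin hcard).strictMono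
  have hmem : ∀ i, ∃ j, m j = e i := by
    intro i
    have h1 : e i ∈ (S : Set (Fin 8)) := by
      have : e i ∈ S := hS ▸ Finset.mem_image_of_mem e (Finset.mem_univ i)
      exact this
    rw [← S.range_orderEmbOfFin hcard] at h1
    exact h1
  choose σ hσ using hmem
  have hinj : Function.Injective σ := by
    intro i j hij
    apply he
    rw [← hσ i, ← hσ j, hij]
  let τ : Fin 4 ≃ Fin 4 := Equiv.ofBijective σ (Finite.injective_iff_bijective.mp hinj)
  have hveq : (![m 0, m 1, m 2, m 3] : Fin 4 → Fin 8) = ⇑m := by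
    funext i; fin_cases i <;> rfl
  obtain ⟨C, hC⟩ := key_minor (m 0) (m 1) (m 2) (m 3)
    (hmono (by decide)) (hmono (by decide)) (hmono (by decide))
  refine ⟨C, fun x y z => ?_⟩
  have h2 : (bitangentMatrix x y z).submatrix e e
      = ((bitangentMatrix x y z).submatrix (⇑m) (⇑m)).submatrix (⇑τ) (⇑τ) := by
    ext i j
    simp only [Matrix.submatrix_apply]
    have : ∀ k, τ k = σ k := fun k => rfl
    rw [this, this, hσ, hσ]
  rw [h2, Matrix.det_submatrix_equiv_self τ]
  have h3 := hC x y z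
  rwa [hveq] at h3
end

section
/- Let f(x,y,z) = x³+y³+z³−m·xyz and fix s, t satisfying t³ − (12m⁴+2592m)t − 16m⁶ + 8640m³ + 93312 = 0 and s = (12m⁴+2592m)t² + (48m⁶−25920m³−279936)t + 48m⁸+20736m⁵+2239488m². Then s·f = Hes(t·f + Hes(f)) as polynomials in x, y, z. -/
open MvPolynomial in
/-- The Hessian determinant of a polynomial in three variables. -/
noncomputable def hes (g : MvPolynomial (Fin 3) ℂ) : MvPolynomial (Fin 3) ℂ :=
  (Matrix.of fun i j : Fin 3 => pderiv i (pderiv j g)).det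

open MvPolynomial in
lemma pderiv_three' (i : Fin 3) : pderiv i (3 : MvPolynomial (Fin 3) ℂ) = 0 := by
  rw [← map_ofNat (C : ℂ →+* MvPolynomial (Fin 3) ℂ) 3, pderiv_C]

open MvPolynomial in
lemma hes_key (a b : ℂ) : hes (C a * (X 0^3 + X 1^3 + X 2^3) + C b * (X 0*X 1*X 2)) =
    C (-6*a*b^2) * (X 0^3 + X 1^3 + X 2^3) + C (216*a^3+2*b^3) * (X 0*X 1*X 2) := by
  unfold hes
  rw [Matrix.det_fin_three]
  simp [pderiv_mul, pderiv_X, Pi.single_apply, pderiv_three', map_ofNat, map_neg, map_mul,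
    map_pow]
  ring

open MvPolynomial in
theorem stmt_19 (m s t : ℂ)
    (ht : t^3 - (12*m^4 + 2592*m)*t - 16*m^6 + 8640*m^3 + 93312 = 0)
    (hs : s = (12*m^4 + 2592*m)*t^2 + (48*m^6 - 25920*m^3 - 279936)*t
        + 48*m^8 + 20736*m^5 + 2239488*m^2) :
    C s * (X 0^3 + X 1^3 + X 2^3 - C m * (X 0 * X 1 * X 2) : MvPolynomial (Fin 3) ℂ)
      = hes (C t * (X 0^3 + X 1^3 + X 2^3 - C m * (X 0 * X 1 * X 2))
          + hes (X 0^3 + X 1^3 + X 2^3 - C m * (X 0 * X 1 * X 2))) := by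
  subst hs
  have e0 : (X 0^3 + X 1^3 + X 2^3 - C m * (X 0 * X 1 * X 2) : MvPolynomial (Fin 3) ℂ)
      = C (1:ℂ) * (X 0^3 + X 1^3 + X 2^3) + C (-m) * (X 0*X 1*X 2) := by
    simp only [map_one, map_neg]; ring
  rw [e0, hes_key]
  have e1 : (C t * (C (1:ℂ) * (X 0^3 + X 1^3 + X 2^3) + C (-m) * (X 0*X 1*X 2))
        + (C (-6*1*(-m)^2) * (X 0^3 + X 1^3 + X 2^3) + C (216*1^3+2*(-m)^3) * (X 0*X 1*X 2))
        : MvPolynomial (Fin 3) ℂ)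
      = C (t - 6*m^2) * (X 0^3 + X 1^3 + X 2^3) + C (216 - 2*m^3 - m*t) * (X 0*X 1*X 2) := by
    simp only [map_sub, map_mul, map_add, map_neg, map_one, map_pow, map_ofNat]; ring
  rw [e1, hes_key]
  have htC : (C (t^3 - (12*m^4 + 2592*m)*t - 16*m^6 + 8640*m^3 + 93312)
      : MvPolynomial (Fin 3) ℂ) = 0 := by rw [ht, map_zero]
  simp only [map_sub, map_mul, map_add, map_neg, map_one, map_pow, map_ofNat] at htC ⊢
  linear_combination (6*(C m : MvPolynomial (Fin 3) ℂ)^2*(X 0^3 + X 1^3 + X 2^3)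
    + (2*(C m)^3 - 216)*(X 0*X 1*X 2)) * htC
end
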